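/- For every integer d, the ring ℤ[√d] possesses an ideal of absolute norm 6 if and only if d is not congruent to 2 modulo 3. -/

import Mathlib

/-- The ring `ℤ[√d]` has an ideal of absolute norm 6 (the absolute norm of an
ideal being the cardinality of the quotient ring) if and only if
`d ≢ 2 (mod 3)`. -/
theorem statement2 (d : ℤ) :
    (∃ I : Ideal (ℤ√d), Nat.card ((ℤ√d) ⧸ I) = 6) ↔ ¬ d % 3 = 2 := by
  constructor
  · rintro ⟨I, hI⟩ hd2
    set R := (ℤ√d) ⧸ I with hR
    have : Finite R := Nat.finite_of_card_ne_zero (by rw [hI]; norm_num)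
    have : Fintype R := Fintype.ofFinite R
    have hcard : Fintype.card R = 6 := by rw [← Nat.card_eq_fintype_card, hI]
    -- the ring characteristic is 6
    have hdvd : ringChar R ∣ 6 := by
      apply ringChar.dvd
      rw [← hcard]
      exact Nat.cast_card_eq_zero R
    have h2 : 2 ∣ ringChar R := by
      have : Fact (Nat.Prime 2) := ⟨by norm_num⟩
      rw [prime_dvd_char_iff_dvd_card, hcard]; norm_num
    have h3 : 3 ∣ ringChar R := by
      have : Fact (Nat.Prime 3) := ⟨by norm_num⟩
      rw [prime_dvd_char_iff_dvd_card, hcard]; norm_num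
    have hchar : ringChar R = 6 := by
      have h6 : 6 ∣ ringChar R := Nat.Coprime.mul_dvd_of_dvd_of_dvd (by norm_num) h2 h3
      exact Nat.dvd_antisymm hdvd h6
    have hCharP : CharP R 6 := hchar ▸ ringChar.charP R
    -- `Int.cast : ℤ → R` is surjective
    have hord : addOrderOf (1 : R) = 6 := by
      apply Nat.dvd_antisymm
      · rw [addOrderOf_dvd_iff_nsmul_eq_zero]
        simp only [nsmul_eq_mul, mul_one]
        exact_mod_cast CharP.cast_eq_zero R 6
      · rw [← hchar]
        apply ringChar.dvd
        have := addOrderOf_nsmul_eq_zero (1 : R)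
        rwa [nsmul_eq_mul, mul_one] at this
    have htop : AddSubgroup.zmultiples (1 : R) = ⊤ := by
      apply AddSubgroup.eq_top_of_card_eq
      rw [Nat.card_zmultiples, hord, hI]
    obtain ⟨a, ha⟩ : ∃ a : ℤ, a • (1 : R) = Ideal.Quotient.mk I Zsqrtd.sqrtd := by
      have : Ideal.Quotient.mk I Zsqrtd.sqrtd ∈ AddSubgroup.zmultiples (1 : R) := by
        rw [htop]; trivial
      exact this
    rw [zsmul_eq_mul, mul_one] at ha
    have hsq : ((a * a - d : ℤ) : R) = 0 := by
      push_cast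
      rw [Int.cast_mul]
      rw [ha]
      rw [show ((d : ℤ) : R) = Ideal.Quotient.mk I ((d : ℤ) : ℤ√d) from (map_intCast _ d).symm]
      rw [← map_mul, ← map_sub, Zsqrtd.dmuld, sub_self, map_zero]
    have h6dvd : (6 : ℤ) ∣ a * a - d := (CharP.intCast_eq_zero_iff R 6 _).mp hsq
    have h3dvd : (3 : ℤ) ∣ a * a - d := dvd_trans (by norm_num) h6dvd
    have hmod : (a * a) % 3 = (a % 3) * (a % 3) % 3 := by rw [Int.mul_emod]
    have h3c : a % 3 = 0 ∨ a % 3 = 1 ∨ a % 3 = 2 := by omega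
    have : (a * a) % 3 = 0 ∨ (a * a) % 3 = 1 := by
      rcases h3c with h | h | h <;> rw [hmod, h] <;> norm_num
    omega
  · intro hd
    -- `d ≡ 0` or `1 (mod 3)`, so `6 ∣ d * d - d`
    have h6 : (6 : ℤ) ∣ d * d - d := by
      have h2 : (2 : ℤ) ∣ d * d - d := by
        obtain ⟨k, hk⟩ := Int.even_mul_succ_self (d - 1)
        exact ⟨k, by linear_combination hk⟩
      have h3 : (3 : ℤ) ∣ d * d - d := by
        have hdm : d ≡ d % 3 [ZMOD 3] := (Int.emod_emod_of_dvd d dvd_rfl).symm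
        have hmE : d * d - d ≡ (d % 3) * (d % 3) - d % 3 [ZMOD 3] :=
          (hdm.mul hdm).sub hdm
        have h3c : d % 3 = 0 ∨ d % 3 = 1 := by omega
        rw [← Int.modEq_zero_iff_dvd]
        rcases h3c with h | h <;> rw [h] at hmE <;> simpa using hmE
      omega
    have hsq : ((d : ZMod 6) * (d : ZMod 6) = ((d : ℤ) : ZMod 6)) := by
      have := (ZMod.intCast_zmod_eq_zero_iff_dvd (d * d - d) 6).mpr h6
      push_cast at this
      linear_combination this
    let f : (ℤ√d) →+* ZMod 6 := Zsqrtd.lift ⟨(d : ZMod 6), hsq⟩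
    have hfs : Function.Surjective f := by
      intro z
      obtain ⟨n, rfl⟩ := ZMod.intCast_surjective z
      exact ⟨(n : ℤ√d), map_intCast f n⟩
    refine ⟨RingHom.ker f, ?_⟩
    have e := RingHom.quotientKerEquivOfSurjective hfs
    rw [Nat.card_congr e.toEquiv]
    simp [Nat.card_eq_fintype_card]
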